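/- For any field k and any nonzero polynomial f ∈ k[x], the tolerant tol(f) is a nonzero element of k (i.e., the element tol(f) of the algebraic closure lies in the image of k and is nonzero). -/

import Mathlib

open Polynomial
open scoped Classical

/-- The tolerant of a polynomial `f` over a field `K` (intended: `K` an algebraic closure and
`f` the image of a polynomial over a subfield): writing `f = a_n ∏ (X - r_i)^{m_i}` with
`r_1, …, r_s` distinct, `tol f = a_n^{2n-2} ∏_{i<j} (r_i - r_j)^{2 m_i m_j}`.  The product is
taken over unordered pairs of distinct roots; this is well defined since the exponents are even. -/
noncomputable def tol {K : Type*} [Field K] (f : K[X]) : K :=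
  f.leadingCoeff ^ (2 * (f.natDegree : ℤ) - 2) *
    ∏ p ∈ f.roots.toFinset.sym2.filter (fun p => ¬ p.IsDiag),
      Sym2.lift ⟨fun a b => ((a - b) ^ 2) ^ (f.rootMultiplicity a * f.rootMultiplicity b),
        fun a b => by
          dsimp only
          rw [mul_comm (rootMultiplicity a f), show (a - b) ^ 2 = (b - a) ^ 2 by ring]⟩ p


section Aux
open Finset

set_option linter.unusedSectionVars false
set_option linter.unusedVariables false

variable {k K : Type*} [Field k] [Field K] [Algebra k K] [IsAlgClosed K]

lemma enum_multiset {α : Type*} (M : Multiset α) :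
    ∃ r : Fin (Multiset.card M) → α, (Finset.univ.val.map r) = M := by
  have hlen : M.toList.length = Multiset.card M := Multiset.length_toList M
  refine ⟨fun i => M.toList.get (Fin.cast hlen.symm i), ?_⟩
  rw [Fin.univ_val_map]
  have : (List.ofFn fun i : Fin (Multiset.card M) => M.toList.get (Fin.cast hlen.symm i))
      = M.toList := by
    apply List.ext_getElem
    · simp [hlen]
    · intro i h1 h2
      simp
  rw [this, Multiset.coe_toList]

lemma symm_eval_mem {n : ℕ} (g : k[X]) (hg : g.Monic) (r : Fin n → K)
    (hr : Finset.univ.val.map r = (g.map (algebraMap k K)).roots)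
    (P : MvPolynomial (Fin n) k) (hP : P.IsSymmetric) :
    MvPolynomial.aeval r P ∈ (algebraMap k K).fieldRange := by
  obtain ⟨Q, hQ⟩ := MvPolynomial.esymmAlgHom_surjective (σ := Fin n) (R := k) (n := n)
    (le_of_eq (Fintype.card_fin n)) ⟨P, hP⟩
  have hQ' : MvPolynomial.aeval (fun i : Fin n => MvPolynomial.esymm (Fin n) k (i + 1)) Q = P := by
    have := congrArg Subtype.val hQ
    rwa [MvPolynomial.esymmAlgHom_apply] at this
  set G := g.map (algebraMap k K) with hG
  have hGm : G.Monic := hg.map _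
  have hcard : Multiset.card G.roots = n := by rw [← hr]; simp
  -- G is the product of X - root
  have hprod : G = (G.roots.map fun a => X - C a).prod :=
    (IsAlgClosed.splits G).eq_prod_roots_of_monic hGm
  -- each esymm of the roots is in the field range
  have hesymm : ∀ j : ℕ, j ≤ n → G.roots.esymm j ∈ (algebraMap k K).fieldRange := by
    intro j hj
    have hco : G.coeff (n - j) = (-1) ^ j * G.roots.esymm j := by
      have := Multiset.prod_X_sub_C_coeff G.roots (k := n - j) (by omega)
      rw [← hprod] at this
      rw [this, hcard]
      congr 2 <;> omega
    have hgc : G.coeff (n - j) = algebraMap k K (g.coeff (n - j)) := by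
      simp [hG, coeff_map]
    refine ⟨(-1) ^ j * g.coeff (n - j), ?_⟩
    rw [map_mul, map_pow, map_neg, map_one, ← hgc, hco]
    rw [← mul_assoc, ← pow_add]
    have : (-1 : K) ^ (j + j) = 1 := by
      rw [← two_mul, pow_mul, neg_one_sq, one_pow]
    rw [this, one_mul]
  -- choose preimages
  have hch : ∀ i : Fin n, ∃ c : k, algebraMap k K c
      = MvPolynomial.aeval r (MvPolynomial.esymm (Fin n) k (i + 1)) := by
    intro i
    rw [MvPolynomial.aeval_esymm_eq_multiset_esymm, hr]
    exact (hesymm (i + 1) i.2).imp (fun c hc => hc)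
  choose c hc using hch
  refine ⟨MvPolynomial.aeval c Q, ?_⟩
  rw [← hQ']
  have h1 : MvPolynomial.aeval r
        ((MvPolynomial.aeval fun i : Fin n => MvPolynomial.esymm (Fin n) k (i + 1)) Q)
      = MvPolynomial.aeval (fun i : Fin n =>
          MvPolynomial.aeval r (MvPolynomial.esymm (Fin n) k (i + 1))) Q := by
    rw [← MvPolynomial.comp_aeval_apply]
  rw [h1]
  simp_rw [← hc]
  have h2 := MvPolynomial.comp_aeval_apply (Algebra.ofId k K) (f := c) (p := Q)
  simp only [Algebra.ofId_apply] at h2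
  exact h2

/-- Root product: product of v evaluated at roots of a monic g lands in the field range. -/
lemma rootProd_mem (g : k[X]) (hg : g.Monic) (v : k[X]) :
    (((g.map (algebraMap k K)).roots).map (fun x => (v.map (algebraMap k K)).eval x)).prod
      ∈ (algebraMap k K).fieldRange := by
  set n := Multiset.card ((g.map (algebraMap k K)).roots) with hn
  obtain ⟨r, hr⟩ := enum_multiset ((g.map (algebraMap k K)).roots)
  set P : MvPolynomial (Fin n) k :=
    ∏ i : Fin n, (Polynomial.aeval (MvPolynomial.X i) v : MvPolynomial (Fin n) k) with hP
  have hsym : P.IsSymmetric := by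
    intro σ
    rw [hP, map_prod]
    have h1 : ∀ i : Fin n, MvPolynomial.rename σ
        (Polynomial.aeval (MvPolynomial.X i) v : MvPolynomial (Fin n) k)
        = Polynomial.aeval (MvPolynomial.X (σ i)) v := by
      intro i
      rw [← Polynomial.aeval_algHom_apply, MvPolynomial.rename_X]
    simp_rw [h1]
    exact Fintype.prod_equiv σ _ _ (fun i => rfl)
  have key := symm_eval_mem (K := K) g hg r hr P hsym
  have heval : MvPolynomial.aeval r P
      = (((g.map (algebraMap k K)).roots).map
          (fun x => (v.map (algebraMap k K)).eval x)).prod := by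
    rw [hP, map_prod]
    have h2 : ∀ i : Fin n, MvPolynomial.aeval r
        ((Polynomial.aeval (MvPolynomial.X i) v : MvPolynomial (Fin n) k))
        = (v.map (algebraMap k K)).eval (r i) := by
      intro i
      rw [← Polynomial.aeval_algHom_apply]
      simp only [MvPolynomial.aeval_X]
      rw [Polynomial.aeval_def, Polynomial.eval_map]
    simp_rw [h2, ← hr, Multiset.map_map]
    rfl
  rwa [heval] at key

/-- Product of differences of roots of a separable monic polynomial. -/
lemma sepDiff_mem (h : k[X]) (hm : h.Monic) (hs : h.Separable) :
    ∏ p ∈ ((h.map (algebraMap k K)).roots.toFinset).offDiag, (p.1 - p.2)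
      ∈ (algebraMap k K).fieldRange := by
  set n := Multiset.card ((h.map (algebraMap k K)).roots) with hn
  obtain ⟨r, hr⟩ := enum_multiset ((h.map (algebraMap k K)).roots)
  have hnd : ((h.map (algebraMap k K)).roots).Nodup := nodup_roots (hs.map)
  rw [← hr] at hnd
  have hrinj : Function.Injective r := by
    intro i j hij
    exact Multiset.inj_on_of_nodup_map hnd _ (by simp) _ (by simp) hij
  set P : MvPolynomial (Fin n) k :=
    ∏ p ∈ Finset.univ.offDiag, (MvPolynomial.X p.1 - MvPolynomial.X p.2) with hP
  have hsym : P.IsSymmetric := by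
    intro σ
    rw [hP, map_prod]
    simp_rw [map_sub, MvPolynomial.rename_X]
    refine Finset.prod_nbij' (fun p => (σ p.1, σ p.2)) (fun p => (σ.symm p.1, σ.symm p.2))
      ?_ ?_ ?_ ?_ ?_
    · intro a ha
      simp only [Finset.mem_offDiag, Finset.mem_univ, true_and] at ha ⊢
      exact fun hc => ha (σ.injective hc)
    · intro a ha
      simp only [Finset.mem_offDiag, Finset.mem_univ, true_and] at ha ⊢
      exact fun hc => ha (σ.symm.injective hc)
    · intro a _; simp
    · intro a _; simp
    · intro a _; rfl
  have key := symm_eval_mem (K := K) h hm r hr P hsym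
  have hTM : ((h.map (algebraMap k K)).roots).toFinset = Finset.univ.image r := by
    ext x
    simp only [Multiset.mem_toFinset, ← hr, Multiset.mem_map, Finset.mem_image]
    simp
  have himg : (Finset.univ.image r).offDiag
      = Finset.univ.offDiag.image (fun p : Fin n × Fin n => (r p.1, r p.2)) := by
    ext ⟨x, y⟩
    simp only [Finset.mem_offDiag, Finset.mem_image, Finset.mem_univ, true_and, Prod.mk.injEq,
      Prod.exists]
    constructor
    · rintro ⟨⟨i, rfl⟩, ⟨j, rfl⟩, hxy⟩
      exact ⟨i, j, fun hij => hxy (by rw [hij]), rfl, rfl⟩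
    · rintro ⟨i, j, hij, rfl, rfl⟩
      exact ⟨⟨i, rfl⟩, ⟨j, rfl⟩, fun hc => hij (hrinj hc)⟩
  have heval : MvPolynomial.aeval r P
      = ∏ p ∈ ((h.map (algebraMap k K)).roots.toFinset).offDiag, (p.1 - p.2) := by
    rw [hP, map_prod, hTM, himg, Finset.prod_image ?hinj]
    case hinj =>
      intro p _ q _ hpq
      rw [Prod.mk.injEq] at hpq
      exact Prod.ext (hrinj hpq.1) (hrinj hpq.2)
    simp
  rwa [heval] at key

lemma group_offDiag_sym2 {α M : Type*} [DecidableEq α] [CommMonoid M] (T : Finset α)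
    (ψ : α → α → M) :
    ∏ p ∈ T.offDiag, ψ p.1 p.2
      = ∏ q ∈ T.sym2.filter (fun q => ¬ q.IsDiag),
          Sym2.lift ⟨fun a b => ψ a b * ψ b a, fun a b => by dsimp; rw [mul_comm]⟩ q := by
  have hmaps : ∀ p ∈ T.offDiag, Sym2.mk p.1 p.2 ∈ T.sym2.filter (fun q => ¬ q.IsDiag) := by
    rintro ⟨a, b⟩ hp
    rw [Finset.mem_offDiag] at hp
    rw [Finset.mem_filter, Finset.mk_mem_sym2_iff]
    exact ⟨⟨hp.1, hp.2.1⟩, by simpa [Sym2.mk_isDiag_iff] using hp.2.2⟩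
  rw [← Finset.prod_fiberwise_of_maps_to hmaps (fun p => ψ p.1 p.2)]
  refine Finset.prod_congr rfl ?_
  intro q hq
  induction q with
  | _ a b =>
    rw [Finset.mem_filter, Finset.mk_mem_sym2_iff] at hq
    obtain ⟨⟨haT, hbT⟩, hdiag⟩ := hq
    have hab : a ≠ b := by simpa [Sym2.mk_isDiag_iff] using hdiag
    have hfil : T.offDiag.filter (fun p => Sym2.mk p.1 p.2 = Sym2.mk a b)
        = {(a, b), (b, a)} := by
      ext ⟨x, y⟩
      simp only [Finset.mem_filter, Finset.mem_offDiag, Finset.mem_insert,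
        Finset.mem_singleton, Prod.mk.injEq, Sym2.mk_eq_mk_iff, Sym2.eq_iff, Prod.swap_prod_mk]
      constructor
      · rintro ⟨-, h | h⟩
        · exact Or.inl h
        · exact Or.inr h
      · rintro (⟨rfl, rfl⟩ | ⟨rfl, rfl⟩)
        · exact ⟨⟨haT, hbT, hab⟩, Or.inl ⟨rfl, rfl⟩⟩
        · exact ⟨⟨hbT, haT, fun hc => hab hc.symm⟩, Or.inr ⟨rfl, rfl⟩⟩
    rw [hfil, Sym2.lift_mk]
    rw [Finset.prod_insert (by
        simp only [Finset.mem_singleton, Prod.mk.injEq, not_and]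
        exact fun hc => absurd hc hab),
      Finset.prod_singleton]

/-- ordered product of differences of distinct roots, with multiplicities -/
noncomputable def Dord {K : Type*} [Field K] (u : K[X]) : K :=
  ∏ p ∈ u.roots.toFinset.offDiag, (p.1 - p.2) ^ (u.roots.count p.1 * u.roots.count p.2)

lemma eval_eq_prod_pow {K : Type*} [Field K] [IsAlgClosed K] (V : K[X]) (hV : V.Monic) (x : K) :
    V.eval x = ∏ y ∈ V.roots.toFinset, (x - y) ^ V.roots.count y := by
  conv_lhs => rw [(IsAlgClosed.splits V).eq_prod_roots_of_monic hV]
  rw [eval_multiset_prod, Multiset.map_map]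
  have : ((V.roots.map (fun a => eval x (X - C a)))).prod
      = ((V.roots.map (fun a => x - a))).prod := by
    congr 1; apply Multiset.map_congr rfl; intro y _; simp
  rw [show (Multiset.map ((fun p => eval x p) ∘ fun a => X - C a) V.roots)
      = (V.roots.map fun a => x - a) from by
    apply Multiset.map_congr rfl; intro y _; simp]
  rw [Finset.prod_multiset_map_count]

lemma Dord_mul (U V : K[X]) (hU : U.Monic) (hV : V.Monic)
    (hdisj : Disjoint U.roots.toFinset V.roots.toFinset) :
    Dord (U * V) = Dord U * Dord V *
      ((U.roots.map (fun x => V.eval x)).prod * (V.roots.map (fun y => U.eval y)).prod) := by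
  classical
  have hU0 : U ≠ 0 := hU.ne_zero
  have hV0 : V ≠ 0 := hV.ne_zero
  have hroots : (U * V).roots = U.roots + V.roots := roots_mul (mul_ne_zero hU0 hV0)
  set Tu := U.roots.toFinset with hTu
  set Tv := V.roots.toFinset with hTv
  have hT : (U * V).roots.toFinset = Tu ∪ Tv := by rw [hroots, Multiset.toFinset_add]
  -- counts
  have hcu : ∀ x ∈ Tu, (U * V).roots.count x = U.roots.count x := by
    intro x hx
    rw [hroots, Multiset.count_add, Multiset.count_eq_zero_of_notMem
      (fun hc => Finset.disjoint_left.1 hdisj hx (Multiset.mem_toFinset.2 hc)), add_zero]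
  have hcv : ∀ y ∈ Tv, (U * V).roots.count y = V.roots.count y := by
    intro y hy
    rw [hroots, Multiset.count_add, Multiset.count_eq_zero_of_notMem
      (fun hc => Finset.disjoint_right.1 hdisj hy (Multiset.mem_toFinset.2 hc)), zero_add]
  rw [Dord, hT, Finset.offDiag_union hdisj]
  -- disjointness of the four pieces
  have d12 : Disjoint Tu.offDiag Tv.offDiag := by
    rw [Finset.disjoint_left]
    rintro ⟨x, y⟩ h1 h2
    rw [Finset.mem_offDiag] at h1 h2
    exact Finset.disjoint_left.1 hdisj h1.1 h2.1
  have d13 : Disjoint (Tu.offDiag ∪ Tv.offDiag) (Tu ×ˢ Tv) := by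
    rw [Finset.disjoint_left]
    rintro ⟨x, y⟩ h1 h2
    rw [Finset.mem_union, Finset.mem_offDiag, Finset.mem_offDiag] at h1
    rw [Finset.mem_product] at h2
    rcases h1 with h1 | h1
    · exact Finset.disjoint_left.1 hdisj h1.2.1 h2.2
    · exact Finset.disjoint_left.1 hdisj h2.1 h1.1
  have d14 : Disjoint (Tu.offDiag ∪ Tv.offDiag ∪ Tu ×ˢ Tv) (Tv ×ˢ Tu) := by
    rw [Finset.disjoint_left]
    rintro ⟨x, y⟩ h1 h2
    rw [Finset.mem_union, Finset.mem_union, Finset.mem_offDiag, Finset.mem_offDiag,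
      Finset.mem_product] at h1
    rw [Finset.mem_product] at h2
    rcases h1 with (h1 | h1) | h1
    · exact Finset.disjoint_left.1 hdisj h1.1 h2.1
    · exact Finset.disjoint_left.1 hdisj h2.2 h1.2.1
    · exact Finset.disjoint_left.1 hdisj h1.1 h2.1
  rw [Finset.prod_union d14, Finset.prod_union d13, Finset.prod_union d12]
  have H1 : ∏ p ∈ Tu.offDiag,
      (p.1 - p.2) ^ ((U * V).roots.count p.1 * (U * V).roots.count p.2) = Dord U := by
    refine Finset.prod_congr rfl ?_
    rintro ⟨x, y⟩ hp
    rw [Finset.mem_offDiag] at hp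
    rw [hcu _ hp.1, hcu _ hp.2.1]
  have H2 : ∏ p ∈ Tv.offDiag,
      (p.1 - p.2) ^ ((U * V).roots.count p.1 * (U * V).roots.count p.2) = Dord V := by
    refine Finset.prod_congr rfl ?_
    rintro ⟨x, y⟩ hp
    rw [Finset.mem_offDiag] at hp
    rw [hcv _ hp.1, hcv _ hp.2.1]
  have H3 : ∏ p ∈ Tu ×ˢ Tv,
      (p.1 - p.2) ^ ((U * V).roots.count p.1 * (U * V).roots.count p.2)
      = (U.roots.map (fun x => V.eval x)).prod := by
    rw [Finset.prod_product]
    rw [Finset.prod_multiset_map_count]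
    refine Finset.prod_congr rfl ?_
    intro x hx
    rw [eval_eq_prod_pow V hV x, ← Finset.prod_pow]
    refine Finset.prod_congr rfl ?_
    intro y hy
    rw [hcu _ hx, hcv _ hy, ← pow_mul, mul_comm (V.roots.count y)]
  have H4 : ∏ p ∈ Tv ×ˢ Tu,
      (p.1 - p.2) ^ ((U * V).roots.count p.1 * (U * V).roots.count p.2)
      = (V.roots.map (fun y => U.eval y)).prod := by
    rw [Finset.prod_product]
    rw [Finset.prod_multiset_map_count]
    refine Finset.prod_congr rfl ?_
    intro y hy
    rw [eval_eq_prod_pow U hU y, ← Finset.prod_pow]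
    refine Finset.prod_congr rfl ?_
    intro x hx
    rw [hcv _ hy, hcu _ hx, ← pow_mul, mul_comm (U.roots.count x)]
  rw [H1, H2, H3, H4, mul_assoc]

lemma Dord_pow (U : K[X]) (a : ℕ) (ha : a ≠ 0) :
    Dord (U ^ a) = Dord U ^ (a * a) := by
  unfold Dord
  rw [roots_pow, Multiset.toFinset_nsmul _ a ha, ← Finset.prod_pow]
  refine Finset.prod_congr rfl ?_
  intro p _
  rw [Multiset.count_nsmul, Multiset.count_nsmul, ← pow_mul]
  ring_nf

lemma Dord_irred (g : k[X]) (hm : g.Monic) (hi : Irreducible g) :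
    Dord (g.map (algebraMap k K)) ∈ (algebraMap k K).fieldRange := by
  set q := ringExpChar k with hq
  haveI : ExpChar k q := ringExpChar.expChar k
  obtain ⟨h, hsep, m, hexp⟩ := hi.hasSeparableContraction q
  have hhm : h.Monic := by
    have := hexp ▸ hm
    rwa [Polynomial.monic_expand_iff (expChar_pow_pos k q m)] at this
  haveI : ExpChar K q := expChar_of_injective_algebraMap (algebraMap k K).injective q
  clear_value q
  -- G = expand (q^m) H
  have hGH : g.map (algebraMap k K) = expand K (q ^ m) (h.map (algebraMap k K)) := by
    rw [← hexp, Polynomial.map_expand]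
  set H := h.map (algebraMap k K) with hH
  have hHnd : H.roots.Nodup := nodup_roots (hsep.map)
  rcases expChar_is_prime_or_one k q with hqp | hq1
  · -- prime characteristic
    haveI : Fact q.Prime := ⟨hqp⟩
    haveI : CharP k q := by
      rcases ‹ExpChar k q› with _ | _
      · exact absurd hqp (by norm_num)
      · assumption
    haveI : CharP K q := charP_of_injective_algebraMap (algebraMap k K).injective q
    set φ : K → K := fun x => (iterateFrobeniusEquiv K q m).symm x with hφ
    have hφinj : Function.Injective φ := (iterateFrobeniusEquiv K q m).symm.injective
    have hφpow : ∀ x : K, (φ x) ^ q ^ m = x := by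
      intro x
      have := (iterateFrobeniusEquiv K q m).apply_symm_apply x
      rwa [iterateFrobeniusEquiv_def] at this
    have hroots : (g.map (algebraMap k K)).roots = q ^ m • H.roots.map φ := by
      rw [hGH, Polynomial.roots_expand_pow]
    have hqm0 : q ^ m ≠ 0 := (expChar_pow_pos k q m).ne'
    have hTG : (g.map (algebraMap k K)).roots.toFinset = H.roots.toFinset.image φ := by
      rw [hroots, Multiset.toFinset_nsmul _ _ hqm0, Multiset.toFinset_map]
    have hndmap : (H.roots.map φ).Nodup := hHnd.map hφinj
    have hcount : ∀ x ∈ (g.map (algebraMap k K)).roots.toFinset,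
        (g.map (algebraMap k K)).roots.count x = q ^ m := by
      intro x hx
      rw [hroots, Multiset.count_nsmul]
      have hx' : x ∈ H.roots.map φ := by
        rw [hroots] at hx
        rw [Multiset.mem_toFinset] at hx
        exact (Multiset.mem_nsmul.1 hx).2
      rw [Multiset.count_eq_one_of_mem hndmap hx', mul_one]
    have himg : (H.roots.toFinset.image φ).offDiag
        = H.roots.toFinset.offDiag.image (fun p : K × K => (φ p.1, φ p.2)) := by
      ext ⟨x, y⟩
      simp only [Finset.mem_offDiag, Finset.mem_image, Prod.mk.injEq, Prod.exists]
      constructor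
      · rintro ⟨⟨a, ha, rfl⟩, ⟨b, hb, rfl⟩, hxy⟩
        exact ⟨a, b, ⟨ha, hb, fun hab => hxy (by rw [hab])⟩, rfl, rfl⟩
      · rintro ⟨a, b, ⟨ha, hb, hab⟩, rfl, rfl⟩
        exact ⟨⟨a, ha, rfl⟩, ⟨b, hb, rfl⟩, fun hc => hab (hφinj hc)⟩
    have key : Dord (g.map (algebraMap k K))
        = (∏ p ∈ H.roots.toFinset.offDiag, (p.1 - p.2)) ^ q ^ m := by
      unfold Dord
      rw [Finset.prod_congr rfl (fun p hp => by
        rw [hcount p.1 (Finset.mem_offDiag.1 hp).1, hcount p.2 (Finset.mem_offDiag.1 hp).2.1])]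
      rw [hTG, himg, Finset.prod_image (fun p _ q _ hpq => by
        rw [Prod.mk.injEq] at hpq
        exact Prod.ext (hφinj hpq.1) (hφinj hpq.2))]
      rw [← Finset.prod_pow]
      refine Finset.prod_congr rfl ?_
      intro p _
      rw [pow_mul]
      congr 1
      rw [sub_pow_char_pow, hφpow, hφpow]
    rw [key]
    exact pow_mem (sepDiff_mem h hhm hsep) _
  · -- q = 1 : separable case
    have hgh : g = h := by rw [← hexp, hq1, one_pow, expand_one]
    have hsepg : g.Separable := hgh ▸ hsep
    have hGnd : (g.map (algebraMap k K)).roots.Nodup := nodup_roots (hsepg.map)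
    have key : Dord (g.map (algebraMap k K))
        = ∏ p ∈ (g.map (algebraMap k K)).roots.toFinset.offDiag, (p.1 - p.2) := by
      unfold Dord
      refine Finset.prod_congr rfl ?_
      intro p hp
      rw [Finset.mem_offDiag] at hp
      rw [Multiset.count_eq_one_of_mem hGnd (Multiset.mem_toFinset.1 hp.1),
        Multiset.count_eq_one_of_mem hGnd (Multiset.mem_toFinset.1 hp.2.1), mul_one, pow_one]
    rw [key]
    exact sepDiff_mem g hm hsepg

lemma disjoint_roots_of_coprime (u v : k[X]) (h : IsCoprime u v) :
    Disjoint (u.map (algebraMap k K)).roots.toFinset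
      (v.map (algebraMap k K)).roots.toFinset := by
  rw [Finset.disjoint_left]
  intro x hxu hxv
  have h' : IsCoprime (u.map (algebraMap k K)) (v.map (algebraMap k K)) :=
    h.map (Polynomial.mapRingHom (algebraMap k K))
  obtain ⟨a, b, hab⟩ := h'
  have h1 : (u.map (algebraMap k K)).IsRoot x :=
    isRoot_of_mem_roots (Multiset.mem_toFinset.1 hxu)
  have h2 : (v.map (algebraMap k K)).IsRoot x :=
    isRoot_of_mem_roots (Multiset.mem_toFinset.1 hxv)
  have := congrArg (Polynomial.eval x) hab
  simp only [eval_add, eval_mul, h1.eq_zero, h2.eq_zero, mul_zero, eval_one,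
    zero_add, add_zero] at this
  exact one_ne_zero this.symm

lemma Dord_multiset_prod (s : Multiset k[X])
    (hs : ∀ g ∈ s, g.Monic ∧ Irreducible g) :
    Dord ((s.prod).map (algebraMap k K)) ∈ (algebraMap k K).fieldRange := by
  induction s using Multiset.strongInductionOn with
  | ih s IH =>
    rcases Multiset.empty_or_exists_mem s with rfl | ⟨g, hg⟩
    · simp only [Multiset.prod_zero, Polynomial.map_one]
      have : Dord (1 : K[X]) = 1 := by
        unfold Dord
        rw [roots_one]
        simp
      rw [this]
      exact one_mem _
    · obtain ⟨hgm, hgi⟩ := hs g hg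
      set a := s.count g with ha
      have ha0 : a ≠ 0 := by
        rw [ha]
        simpa using hg
      set s' := s.filter (· ≠ g) with hs'
      have hsplit : s = Multiset.replicate a g + s' := by
        rw [ha, hs', ← Multiset.filter_eq' s g]
        exact (Multiset.filter_add_not _ s).symm
      have hs'lt : s' < s := by
        refine lt_of_le_of_ne (Multiset.filter_le _ s) ?_
        intro hc
        have : g ∈ s' := hc.symm ▸ hg
        rw [hs', Multiset.mem_filter] at this
        exact this.2 rfl
      have hs'mem : ∀ x ∈ s', x.Monic ∧ Irreducible x :=
        fun x hx => hs x (Multiset.mem_of_le (Multiset.filter_le _ s) hx)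
      have hprod : s.prod = g ^ a * s'.prod := by
        rw [hsplit, Multiset.prod_add, Multiset.prod_replicate]
      have hgh : ¬ g ∣ s'.prod := by
        intro hdvd
        have hp : Prime g := hgi.prime
        obtain ⟨x, hxs', hgx⟩ := hp.exists_mem_multiset_dvd hdvd
        obtain ⟨hxm, hxi⟩ := hs'mem x hxs'
        have : Associated g x := associated_of_dvd_dvd hgx (hgi.dvd_symm hxi hgx)
        have : g = x := eq_of_monic_of_associated hgm hxm this
        rw [hs', Multiset.mem_filter] at hxs'
        exact hxs'.2 this.symm
      have hcop : IsCoprime (g ^ a) s'.prod :=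
        (hgi.coprime_iff_not_dvd.2 hgh).pow_left
      have hgam : (g ^ a).Monic := hgm.pow a
      have hs'm : s'.prod.Monic := by
        have := monic_multiset_prod_of_monic s' id (fun x hx => (hs'mem x hx).1)
        simpa using this
      rw [hprod, Polynomial.map_mul]
      rw [Dord_mul _ _ (hgam.map _) (hs'm.map _)
        (disjoint_roots_of_coprime _ _ hcop)]
      refine mul_mem (mul_mem ?_ ?_) (mul_mem ?_ ?_)
      · rw [Polynomial.map_pow, Dord_pow _ a ha0]
        exact pow_mem (Dord_irred g hgm hgi) _
      · exact IH s' hs'lt hs'mem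
      · exact rootProd_mem (g ^ a) hgam s'.prod
      · exact rootProd_mem s'.prod hs'm (g ^ a)

lemma Dord_monic_mem (f : k[X]) (hf : f.Monic) :
    Dord (f.map (algebraMap k K)) ∈ (algebraMap k K).fieldRange := by
  have hf0 : f ≠ 0 := hf.ne_zero
  have hassoc : Associated (UniqueFactorizationMonoid.normalizedFactors f).prod f :=
    UniqueFactorizationMonoid.prod_normalizedFactors hf0
  have hmem : ∀ g ∈ UniqueFactorizationMonoid.normalizedFactors f, g.Monic ∧ Irreducible g := by
    intro g hg
    have hirr := UniqueFactorizationMonoid.irreducible_of_normalized_factor g hg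
    have hnorm := UniqueFactorizationMonoid.normalize_normalized_factor g hg
    have : (normalize g).Monic := monic_normalize hirr.ne_zero
    rw [hnorm] at this
    exact ⟨this, hirr⟩
  have hpm : (UniqueFactorizationMonoid.normalizedFactors f).prod.Monic := by
    have := monic_multiset_prod_of_monic (UniqueFactorizationMonoid.normalizedFactors f) id
      (fun x hx => (hmem x hx).1)
    simpa using this
  have heq : (UniqueFactorizationMonoid.normalizedFactors f).prod = f :=
    eq_of_monic_of_associated hpm hf hassoc
  rw [← heq]
  exact Dord_multiset_prod _ hmem

end Aux

/-- Rationality of the tolerant: for any field `k` and nonzero `f ∈ k[x]`, the tolerant `tol f`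
(an a priori element of the algebraic closure) is the image of a nonzero element of `k`. -/
theorem tol_rational {k : Type*} [Field k] (f : k[X]) (hf : f ≠ 0) :
    ∃ c : k, c ≠ 0 ∧
      algebraMap k (AlgebraicClosure k) c = tol (f.map (algebraMap k (AlgebraicClosure k))) := by
  set K := AlgebraicClosure k
  set ι := algebraMap k K with hι
  set F := ι.fieldRange with hF
  set fb := f.map ι with hfb
  have hfb0 : fb ≠ 0 := (Polynomial.map_ne_zero_iff (algebraMap k K).injective).2 hf
  -- Step A : tol fb ≠ 0
  have hlcne : fb.leadingCoeff ≠ 0 := leadingCoeff_ne_zero.2 hfb0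
  have htolne : tol fb ≠ 0 := by
    unfold tol
    refine mul_ne_zero (zpow_ne_zero _ hlcne) ?_
    rw [Finset.prod_ne_zero_iff]
    intro q hq
    rw [Finset.mem_filter] at hq
    induction q with
    | _ a b =>
      rw [Sym2.lift_mk]
      have hab : a ≠ b := by
        have := hq.2
        rw [Sym2.mk_isDiag_iff] at this
        exact this
      exact pow_ne_zero _ (pow_ne_zero _ (sub_ne_zero.2 hab))
  -- Step B : tol fb ∈ F
  have htolmem : tol fb ∈ F := by
    -- monic normalization
    set u := f * C f.leadingCoeff⁻¹ with hu
    have hum : u.Monic := monic_mul_leadingCoeff_inv hf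
    set U := u.map ι with hU
    have hlcmem : ι f.leadingCoeff⁻¹ ≠ 0 := by
      rw [map_ne_zero_iff _ (algebraMap k K).injective]
      exact inv_ne_zero (leadingCoeff_ne_zero.2 hf)
    have hUfb : U = C (ι f.leadingCoeff⁻¹) * fb := by
      rw [hU, hu, Polynomial.map_mul, Polynomial.map_C, mul_comm]
    have hroots : fb.roots = U.roots := by rw [hUfb, roots_C_mul _ hlcmem]
    -- leading coefficient part
    have hlead : fb.leadingCoeff ^ (2 * (fb.natDegree : ℤ) - 2) ∈ F := by
      refine zpow_mem ?_ _
      rw [hfb, leadingCoeff_map]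
      exact ⟨f.leadingCoeff, rfl⟩
    -- the sym2 product, rewritten with counts of U
    unfold tol
    refine mul_mem hlead ?_
    have hrm : ∀ a : K, fb.rootMultiplicity a = U.roots.count a := by
      intro a
      rw [← count_roots, hroots]
    -- rewrite the product
    have hstep : ∀ q ∈ U.roots.toFinset.sym2.filter (fun q => ¬ q.IsDiag),
        Sym2.lift ⟨fun a b => ((a - b) ^ 2) ^ (fb.rootMultiplicity a * fb.rootMultiplicity b),
          fun a b => by
            dsimp only
            rw [mul_comm (rootMultiplicity a fb), show (a - b) ^ 2 = (b - a) ^ 2 by ring]⟩ q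
        = Sym2.lift ⟨fun a b => ((a - b) ^ 2) ^ (U.roots.count a * U.roots.count b),
          fun a b => by
            dsimp only
            rw [mul_comm (U.roots.count a), show (a - b) ^ 2 = (b - a) ^ 2 by ring]⟩ q := by
      intro q _
      induction q with
      | _ a b =>
        simp only [Sym2.lift_mk]
        rw [hrm, hrm]
    rw [show fb.roots.toFinset = U.roots.toFinset by rw [hroots]]
    rw [Finset.prod_congr rfl hstep]
    -- now relate to Dord U via the grouping lemma
    set T := U.roots.toFinset with hT
    set cnt : K → ℕ := fun a => U.roots.count a with hcnt
    have hgroup := group_offDiag_sym2 T (fun a b => (a - b) ^ (cnt a * cnt b))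
    have hDord : Dord U = ∏ p ∈ T.offDiag, (p.1 - p.2) ^ (cnt p.1 * cnt p.2) := rfl
    -- pointwise : ψ a b * ψ b a = (-1)^(e) * ((a-b)^2)^e
    have hpoint : ∀ q ∈ T.sym2.filter (fun q => ¬ q.IsDiag),
        Sym2.lift ⟨fun a b => (a - b) ^ (cnt a * cnt b) * (b - a) ^ (cnt b * cnt a),
          fun a b => by dsimp; rw [mul_comm]⟩ q
        = Sym2.lift ⟨fun a b => ((-1 : K)) ^ (cnt a * cnt b),
            fun a b => by dsimp; rw [mul_comm (cnt a)]⟩ q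
          * Sym2.lift ⟨fun a b => ((a - b) ^ 2) ^ (cnt a * cnt b),
            fun a b => by
              dsimp only
              rw [mul_comm (cnt a), show (a - b) ^ 2 = (b - a) ^ 2 by ring]⟩ q := by
      intro q _
      induction q with
      | _ a b =>
        simp only [Sym2.lift_mk]
        rw [mul_comm (cnt b) (cnt a), ← mul_pow, ← mul_pow]
        congr 1
        ring
    have hDg : Dord U
        = (∏ q ∈ T.sym2.filter (fun q => ¬ q.IsDiag),
            Sym2.lift ⟨fun a b => ((-1 : K)) ^ (cnt a * cnt b),
              fun a b => by dsimp; rw [mul_comm (cnt a)]⟩ q)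
          * ∏ q ∈ T.sym2.filter (fun q => ¬ q.IsDiag),
              Sym2.lift ⟨fun a b => ((a - b) ^ 2) ^ (cnt a * cnt b),
                fun a b => by
                  dsimp only
                  rw [mul_comm (cnt a), show (a - b) ^ 2 = (b - a) ^ 2 by ring]⟩ q := by
      rw [hDord, hgroup, Finset.prod_congr rfl hpoint, Finset.prod_mul_distrib]
    -- epsilon
    set ε := ∏ q ∈ T.sym2.filter (fun q => ¬ q.IsDiag),
        Sym2.lift ⟨fun a b => ((-1 : K)) ^ (cnt a * cnt b),
          fun a b => by dsimp; rw [mul_comm (cnt a)]⟩ q with hε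
    have hεmem : ε ∈ F := by
      refine prod_mem ?_
      intro q hq
      induction q with
      | _ a b =>
        rw [Sym2.lift_mk]
        exact ⟨(-1 : k) ^ (cnt a * cnt b), by rw [map_pow, map_neg, map_one]⟩
    have hεne : ε ≠ 0 := by
      rw [hε, Finset.prod_ne_zero_iff]
      intro q hq
      induction q with
      | _ a b =>
        rw [Sym2.lift_mk]
        exact pow_ne_zero _ (by norm_num)
    have hfinal : (∏ q ∈ T.sym2.filter (fun q => ¬ q.IsDiag),
        Sym2.lift ⟨fun a b => ((a - b) ^ 2) ^ (cnt a * cnt b),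
          fun a b => by
            dsimp only
            rw [mul_comm (cnt a), show (a - b) ^ 2 = (b - a) ^ 2 by ring]⟩ q)
        = ε⁻¹ * Dord U := by
      rw [hDg, inv_mul_cancel_left₀ hεne]
    rw [hfinal]
    exact mul_mem (inv_mem hεmem) (Dord_monic_mem u hum)
  obtain ⟨c, hc⟩ := htolmem
  exact ⟨c, fun hc0 => htolne (by rw [← hc, hc0, map_zero]), hc⟩
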